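/- Let μ and ν be probability measures on ℝ, each with integrable identity of mean zero, ν((-∞,0)) = 1/2 = ν((0,∞)). Let F > 0, H < 0 and C be real numbers and set π_x(θ,ω) = (B + θ)·F + ω·H − C for a real constant B. Let v < 0. Then, under the product measure μ ⊗ ν, the cross-partial N = v·[ (1/2)·∫_{ℝ×(-∞,0)} π_x d(μ⊗ν) − (1/2)·∫_{ℝ×(0,∞)} π_x d(μ⊗ν) ] is strictly negative; consequently, for any D < 0, ∂x*/∂γ = −N/D is strictly negative. (Proposition 3.1, risk-decreasing case: an index insurance contract triggered on the extraction shock at ω̄ = 0 decreases optimal input use and harvest when h'(x) < 0 and the shocks are independent.) -/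

import Mathlib

open MeasureTheory Set

lemma int_fst_aux (μ ν' : Measure ℝ) [IsFiniteMeasure ν'] (h : Integrable id μ) :
    Integrable (fun p : ℝ × ℝ => p.1) (μ.prod ν') := by
  have : (fun p : ℝ × ℝ => p.1) = id ∘ Prod.fst := rfl
  rw [this]
  refine (integrable_map_measure ?_ measurable_fst.aemeasurable).mp ?_
  · rw [Measure.map_fst_prod]
    exact (measurable_id.aestronglyMeasurable)
  · rw [Measure.map_fst_prod]
    exact h.smul_measure (measure_ne_top _ _)

lemma int_snd_aux (μ ν' : Measure ℝ) [IsFiniteMeasure μ] [IsFiniteMeasure ν']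
    (h : Integrable id ν') : Integrable (fun p : ℝ × ℝ => p.2) (μ.prod ν') := by
  have : (fun p : ℝ × ℝ => p.2) = id ∘ Prod.snd := rfl
  rw [this]
  refine (integrable_map_measure ?_ measurable_snd.aemeasurable).mp ?_
  · rw [Measure.map_snd_prod]
    exact (measurable_id.aestronglyMeasurable)
  · rw [Measure.map_snd_prod]
    exact h.smul_measure (measure_ne_top _ _)

lemma key_int (μ ν : Measure ℝ) [IsProbabilityMeasure μ] [IsProbabilityMeasure ν]
    (hIntμ : Integrable id μ) (hmeanμ : ∫ θ, θ ∂μ = 0)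
    (hIntν : Integrable id ν) (S : Set ℝ) (hS : MeasurableSet S) (hSm : ν S = 1/2)
    (B F H C : ℝ) :
    ∫ p in (univ : Set ℝ) ×ˢ S, ((B + p.1) * F + p.2 * H - C) ∂(μ.prod ν)
      = (∫ ω in S, ω ∂ν) * H + (B * F - C) * (1/2) := by
  rw [← Measure.prod_restrict, Measure.restrict_univ]
  have hfin : IsFiniteMeasure (ν.restrict S) := by
    constructor
    rw [Measure.restrict_apply_univ, hSm]
    exact ENNReal.div_lt_top (by simp) (by simp)
  have h1 : Integrable (fun p : ℝ × ℝ => p.1) (μ.prod (ν.restrict S)) :=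
    int_fst_aux μ _ hIntμ
  have h2 : Integrable (fun p : ℝ × ℝ => p.2) (μ.prod (ν.restrict S)) :=
    int_snd_aux μ _ (hIntν.restrict)
  have heq : ∀ p : ℝ × ℝ, (B + p.1) * F + p.2 * H - C
      = p.1 * F + (p.2 * H + (B * F - C)) := by intro p; ring
  simp_rw [heq]
  have hg : Integrable (fun p : ℝ × ℝ => p.2 * H + (B * F - C)) (μ.prod (ν.restrict S)) :=
    (h2.mul_const H).add (integrable_const _)
  rw [integral_add (h1.mul_const F) hg]
  rw [integral_add (h2.mul_const H) (integrable_const _)]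
  rw [integral_mul_const, integral_mul_const]
  have e1 : ∫ p : ℝ × ℝ, p.1 ∂(μ.prod (ν.restrict S)) = 0 := by
    rw [integral_fun_fst (f := fun x : ℝ => x)]
    simp [hmeanμ]
  have e2 : ∫ p : ℝ × ℝ, p.2 ∂(μ.prod (ν.restrict S)) = ∫ ω in S, ω ∂ν := by
    rw [integral_fun_snd (f := fun x : ℝ => x)]
    simp
  rw [e1, e2, integral_const]
  have : (μ.prod (ν.restrict S)) univ = 1/2 := by
    rw [← Set.univ_prod_univ, Measure.prod_prod, measure_univ, one_mul,
      Measure.restrict_apply_univ, hSm]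
  rw [measureReal_def, this]
  have : ((1 : ENNReal)/2).toReal = (1:ℝ)/2 := by simp
  rw [this, smul_eq_mul]
  ring

theorem stmt_7 (μ ν : Measure ℝ) [IsProbabilityMeasure μ] [IsProbabilityMeasure ν]
    (hIntμ : Integrable id μ) (hmeanμ : ∫ θ, θ ∂μ = 0)
    (hIntν : Integrable id ν) (hmeanν : ∫ ω, ω ∂ν = 0)
    (hmed1 : ν (Iio 0) = 1/2) (hmed2 : ν (Ioi 0) = 1/2)
    (B F H C v : ℝ) (hF : 0 < F) (hH : H < 0) (hv : v < 0)
    (N : ℝ)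
    (hN : N = v * ((1/2) * ∫ p in (univ : Set ℝ) ×ˢ (Iio (0 : ℝ)),
              ((B + p.1) * F + p.2 * H - C) ∂(μ.prod ν)
            - (1/2) * ∫ p in (univ : Set ℝ) ×ˢ (Ioi (0 : ℝ)),
              ((B + p.1) * F + p.2 * H - C) ∂(μ.prod ν))) :
    N < 0 ∧ ∀ D : ℝ, D < 0 → -N / D < 0 := by
  have e1 := key_int μ ν hIntμ hmeanμ hIntν (Iio 0) measurableSet_Iio hmed1 B F H C
  have e2 := key_int μ ν hIntμ hmeanμ hIntν (Ioi 0) measurableSet_Ioi hmed2 B F H C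
  set Im : ℝ := ∫ ω in Iio (0:ℝ), ω ∂ν with hIm
  set Ip : ℝ := ∫ ω in Ioi (0:ℝ), ω ∂ν with hIp
  have hIpos : 0 < Ip := by
    rw [hIp]
    rw [setIntegral_pos_iff_support_of_nonneg_ae]
    · have : (Function.support (fun x : ℝ => x)) ∩ Ioi 0 = Ioi 0 := by
        apply inter_eq_self_of_subset_right
        intro x hx
        exact ne_of_gt hx
      rw [this, hmed2]
      simp
    · filter_upwards [ae_restrict_mem measurableSet_Ioi] with x hx
      exact le_of_lt hx
    · exact hIntν.integrableOn
  have hIneg : Im < 0 := by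
    have : 0 < ∫ ω in Iio (0:ℝ), -ω ∂ν := by
      rw [setIntegral_pos_iff_support_of_nonneg_ae]
      · have : (Function.support (fun x : ℝ => -x)) ∩ Iio 0 = Iio 0 := by
          apply inter_eq_self_of_subset_right
          intro x hx
          have hx' : x < 0 := hx
          simp only [Function.mem_support]
          intro hc
          have : x = 0 := by linarith [neg_eq_zero.mp hc]
          exact absurd this (ne_of_lt hx')
        rw [this, hmed1]
        simp
      · filter_upwards [ae_restrict_mem measurableSet_Iio] with x hx
        have := mem_Iio.mp hx
        simp only [Pi.zero_apply]
        linarith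
      · exact (hIntν.integrableOn).neg
    rw [integral_neg] at this
    rw [hIm]; linarith
  have hNval : N = v * (H * (Im - Ip) / 2) := by
    rw [hN, e1, e2]; ring
  have hN0 : N < 0 := by
    rw [hNval]
    have h1 : 0 < v * H := mul_pos_of_neg_of_neg hv hH
    nlinarith
  refine ⟨hN0, fun D hD => ?_⟩
  exact div_neg_of_pos_of_neg (by linarith) hD
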